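/- Let μ₂ > μ₃ ≥ 0 be real numbers and let (t_s)_{s∈ℕ} be a sequence of reals with 0 ≤ t_s ≤ 1 for all s. Define T(μ) = ∑_{s=0}^∞ e^{−μ} (μ^s/s!) t_s (the series converges absolutely). Then t₁ ≤ (e^{μ₂} T(μ₂) − e^{μ₃} T(μ₃)) / (μ₂ − μ₃). -/
import Mathlib

/-- The observable quantity at laser intensity `μ`:
`T(μ) = ∑_{s=0}^∞ e^{−μ} (μ^s/s!) t_s` (Poisson average of `(t_s)`). -/
noncomputable def decoyT (μ : ℝ) (t : ℕ → ℝ) : ℝ :=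
  ∑' s : ℕ, Real.exp (-μ) * μ ^ s / (Nat.factorial s : ℝ) * t s

lemma decoy_summable (μ : ℝ) (hμ : 0 ≤ μ) (t : ℕ → ℝ) (ht0 : ∀ s, 0 ≤ t s)
    (ht1 : ∀ s, t s ≤ 1) : Summable (fun s : ℕ => μ ^ s / (Nat.factorial s : ℝ) * t s) := by
  refine Summable.of_nonneg_of_le (fun s => ?_) (fun s => ?_)
    (Real.summable_pow_div_factorial μ)
  · exact mul_nonneg (div_nonneg (pow_nonneg hμ s) (by positivity)) (ht0 s)
  · calc μ ^ s / (Nat.factorial s : ℝ) * t s ≤ μ ^ s / (Nat.factorial s : ℝ) * 1 := by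
          apply mul_le_mul_of_nonneg_left (ht1 s)
          exact div_nonneg (pow_nonneg hμ s) (by positivity)
    _ = μ ^ s / (Nat.factorial s : ℝ) := mul_one _

lemma decoy_exp_mul (μ : ℝ) (t : ℕ → ℝ) :
    Real.exp μ * decoyT μ t = ∑' s : ℕ, μ ^ s / (Nat.factorial s : ℝ) * t s := by
  unfold decoyT
  have : (fun s : ℕ => Real.exp (-μ) * μ ^ s / (Nat.factorial s : ℝ) * t s)
      = fun s : ℕ => Real.exp (-μ) * (μ ^ s / (Nat.factorial s : ℝ) * t s) := by
    funext s; ring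
  rw [this, tsum_mul_left, ← mul_assoc, ← Real.exp_add, add_neg_cancel, Real.exp_zero, one_mul]

/-- **Decoy-state upper bound on the single-photon term `t₁`.**
For intensities `μ₂ > μ₃ ≥ 0` and per-photon-number probabilities
`0 ≤ t_s ≤ 1`, one has
`t₁ ≤ (e^{μ₂} T(μ₂) − e^{μ₃} T(μ₃)) / (μ₂ − μ₃)`. -/
theorem decoy_t1_upper_bound (μ₂ μ₃ : ℝ) (h32 : μ₃ < μ₂) (h3 : 0 ≤ μ₃)
    (t : ℕ → ℝ) (ht0 : ∀ s, 0 ≤ t s) (ht1 : ∀ s, t s ≤ 1) :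
    t 1 ≤ (Real.exp μ₂ * decoyT μ₂ t - Real.exp μ₃ * decoyT μ₃ t) / (μ₂ - μ₃) := by
  have h2 : (0:ℝ) ≤ μ₂ := le_of_lt (lt_of_le_of_lt h3 h32)
  rw [le_div_iff₀ (by linarith)]
  rw [decoy_exp_mul, decoy_exp_mul]
  have hs2 := decoy_summable μ₂ h2 t ht0 ht1
  have hs3 := decoy_summable μ₃ h3 t ht0 ht1
  rw [← Summable.tsum_sub hs2 hs3]
  have key : t 1 * (μ₂ - μ₃) ≤ ∑' s : ℕ,
      (μ₂ ^ s / (Nat.factorial s : ℝ) * t s - μ₃ ^ s / (Nat.factorial s : ℝ) * t s) := by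
    have hnn : ∀ s : ℕ, 0 ≤ μ₂ ^ s / (Nat.factorial s : ℝ) * t s
        - μ₃ ^ s / (Nat.factorial s : ℝ) * t s := by
      intro s
      have : μ₃ ^ s ≤ μ₂ ^ s := pow_le_pow_left₀ h3 h32.le s
      rw [sub_nonneg]
      gcongr <;> first
        | exact ht0 s
        | exact pow_le_pow_left₀ h3 h32.le s
    have h := Summable.le_tsum (hs2.sub hs3) 1 (fun s _ => hnn s)
    simp only [pow_one, Nat.factorial_one, Nat.cast_one, div_one] at h
    have he : t 1 * (μ₂ - μ₃) = μ₂ * t 1 - μ₃ * t 1 := by ring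
    rw [he]; exact h
  linarith [key]
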